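/- Let d ≥ 2 and let m_{−d} : ℝ/ℤ → ℝ/ℤ be t ↦ −d·t. The d + 1 fixed points of m_{−d} are exactly the points k/(d+1) for k = 0, 1, …, d, and they partition the circle into d + 1 arcs I_0, …, I_d such that for each i, the image m_{−d}(closure(I_i)) equals the union of the closures of all arcs I_j with j ≠ i. -/

import Mathlib

open Set

namespace Markov16

lemma coe_eq_coe_iff {x y : ℝ} :
    (x : AddCircle (1:ℝ)) = (y : AddCircle (1:ℝ)) ↔ ∃ n : ℤ, x - y = (n:ℝ) := by
  constructor
  · intro h
    have h0 : ((x - y : ℝ) : AddCircle (1:ℝ)) = 0 := by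
      rw [AddCircle.coe_sub, h, sub_self]
    rw [AddCircle.coe_eq_zero_iff] at h0
    obtain ⟨n, hn⟩ := h0
    exact ⟨n, by simpa using hn.symm⟩
  · rintro ⟨n, hn⟩
    have h0 : ((x - y : ℝ) : AddCircle (1:ℝ)) = 0 := by
      rw [AddCircle.coe_eq_zero_iff]
      exact ⟨n, by simpa using hn.symm⟩
    rw [AddCircle.coe_sub, sub_eq_zero] at h0
    exact h0

lemma exists_rep (a : ℝ) (t : AddCircle (1:ℝ)) :
    ∃ x ∈ Ico a (a+1), (x : AddCircle (1:ℝ)) = t := by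
  have h : t ∈ ((↑) : ℝ → AddCircle (1:ℝ)) '' Ico a (a+1) := by
    rw [AddCircle.coe_image_Ico_eq]; trivial
  obtain ⟨x, hx, hxt⟩ := h
  exact ⟨x, hx, hxt⟩

lemma closure_arc {a b : ℝ} (h : a < b) :
    closure ((fun x : ℝ => (x : AddCircle (1:ℝ))) '' Ioo a b)
      = (fun x : ℝ => (x : AddCircle (1:ℝ))) '' Icc a b := by
  have hc : Continuous (fun x : ℝ => (x : AddCircle (1:ℝ))) := continuous_quotient_mk'
  apply Subset.antisymm
  · exact closure_minimal (image_mono Ioo_subset_Icc_self)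
      (isCompact_Icc.image hc).isClosed
  · rw [← closure_Ioo h.ne]
    exact image_closure_subset_closure_image hc

lemma arc_cover (d : ℕ) {x : ℝ} (h0 : 0 ≤ x) (h1 : x ≤ 1) :
    ∃ j : ℕ, j ≤ d ∧ (j:ℝ)/((d:ℝ)+1) ≤ x ∧ x ≤ ((j:ℝ)+1)/((d:ℝ)+1) := by
  have hD : (0:ℝ) < (d:ℝ)+1 := by positivity
  have hfl0 : 0 ≤ ⌊x*((d:ℝ)+1)⌋ := Int.floor_nonneg.mpr (by positivity)
  by_cases hc : ⌊x*((d:ℝ)+1)⌋.toNat ≤ d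
  · refine ⟨⌊x*((d:ℝ)+1)⌋.toNat, hc, ?_, ?_⟩
    · rw [div_le_iff₀ hD]
      have : ((⌊x*((d:ℝ)+1)⌋.toNat : ℕ) : ℝ) = ((⌊x*((d:ℝ)+1)⌋ : ℤ) : ℝ) := by
        exact_mod_cast congrArg (Int.cast : ℤ → ℝ) (Int.toNat_of_nonneg hfl0)
      rw [this]
      exact Int.floor_le _
    · rw [le_div_iff₀ hD]
      have h2 := Int.lt_floor_add_one (x*((d:ℝ)+1))
      have : ((⌊x*((d:ℝ)+1)⌋.toNat : ℕ) : ℝ) = ((⌊x*((d:ℝ)+1)⌋ : ℤ) : ℝ) := by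
        exact_mod_cast congrArg (Int.cast : ℤ → ℝ) (Int.toNat_of_nonneg hfl0)
      rw [this]
      linarith
  · refine ⟨d, le_rfl, ?_, ?_⟩
    · have h2 : (d:ℤ) + 1 ≤ ⌊x*((d:ℝ)+1)⌋ := by omega
      have h3 : ((d:ℝ)+1) ≤ x*((d:ℝ)+1) := by
        have h4 := Int.floor_le (x*((d:ℝ)+1))
        calc ((d:ℝ)+1) = (((d:ℤ)+1 : ℤ) : ℝ) := by push_cast; ring
        _ ≤ ((⌊x*((d:ℝ)+1)⌋ : ℤ) : ℝ) := by exact_mod_cast h2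
        _ ≤ x*((d:ℝ)+1) := h4
      rw [div_le_iff₀ hD]
      linarith
    · rw [le_div_iff₀ hD]
      nlinarith

end Markov16

open Markov16 Set in
set_option maxHeartbeats 2000000 in
theorem markov_partition_neg_power (d : ℕ) (hd : 2 ≤ d) :
    let f : AddCircle (1 : ℝ) → AddCircle (1 : ℝ) := fun t => (-(d : ℤ)) • t
    let I : ℕ → Set (AddCircle (1 : ℝ)) := fun k =>
      (fun x : ℝ => (x : AddCircle (1 : ℝ))) ''
        Set.Ioo ((k : ℝ) / (d + 1)) (((k : ℝ) + 1) / (d + 1))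
    ({t | f t = t} =
        {t | ∃ k ≤ d, t = (((k : ℝ) / (d + 1) : ℝ) : AddCircle (1 : ℝ))}) ∧
      (Set.univ = {t | f t = t} ∪ ⋃ j ∈ {j : ℕ | j ≤ d}, I j) ∧
      (∀ i ≤ d, f '' closure (I i) = ⋃ j ∈ {j : ℕ | j ≤ d ∧ j ≠ i}, closure (I j)) := by
  intro f I
  have hD : (0:ℝ) < (d:ℝ)+1 := by positivity
  have hdpos : (0:ℝ) < (d:ℝ) := by
    have : (0:ℕ) < d := by omega
    exact_mod_cast this
  have hdne : (d:ℝ) ≠ 0 := ne_of_gt hdpos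
  have hfc : ∀ x : ℝ, f ((x : ℝ) : AddCircle (1:ℝ)) = ((-(d:ℝ) * x : ℝ) : AddCircle (1:ℝ)) := by
    intro x
    show (-(d:ℤ)) • ((x:ℝ) : AddCircle (1:ℝ)) = _
    rw [← AddCircle.coe_zsmul]
    congr 1
    push_cast [zsmul_eq_mul]
    ring
  have hfix : ∀ n : ℤ, f (((n:ℝ)/((d:ℝ)+1) : ℝ) : AddCircle (1:ℝ))
      = (((n:ℝ)/((d:ℝ)+1) : ℝ) : AddCircle (1:ℝ)) := by
    intro n
    rw [hfc, coe_eq_coe_iff]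
    refine ⟨-n, ?_⟩
    push_cast
    field_simp
    ring
  have hlt : ∀ j : ℕ, (j:ℝ)/((d:ℝ)+1) < ((j:ℝ)+1)/((d:ℝ)+1) := by
    intro j
    rw [div_lt_div_iff₀ hD hD]
    nlinarith
  have hclo : ∀ j : ℕ, closure (I j)
      = (fun x : ℝ => (x : AddCircle (1:ℝ))) ''
          Icc ((j:ℝ)/((d:ℝ)+1)) (((j:ℝ)+1)/((d:ℝ)+1)) := by
    intro j
    exact closure_arc (hlt j)
  have part1 : {t | f t = t}
      = {t | ∃ k ≤ d, t = (((k : ℝ) / (d + 1) : ℝ) : AddCircle (1 : ℝ))} := by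
    ext t
    simp only [mem_setOf_eq]
    constructor
    · intro ht
      obtain ⟨x, hx, rfl⟩ := exists_rep 0 t
      rw [zero_add] at hx
      rw [hfc, coe_eq_coe_iff] at ht
      obtain ⟨n, hn⟩ := ht
      have hmr : ((-n : ℤ):ℝ) = x*((d:ℝ)+1) := by push_cast; nlinarith [hn]
      have hm0 : (0:ℤ) ≤ -n := by
        have : (0:ℝ) ≤ ((-n:ℤ):ℝ) := by rw [hmr]; nlinarith [hx.1]
        exact_mod_cast this
      have hm1 : -n < (d:ℤ) + 1 := by
        have : ((-n:ℤ):ℝ) < (d:ℝ) + 1 := by rw [hmr]; nlinarith [hx.2]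
        exact_mod_cast this
      refine ⟨(-n).toNat, by omega, ?_⟩
      have hxv : x = (((-n).toNat : ℕ) : ℝ)/((d:ℝ)+1) := by
        have h5 : (((-n).toNat : ℕ) : ℝ) = ((-n:ℤ):ℝ) := by exact_mod_cast Int.toNat_of_nonneg hm0
        rw [h5, hmr]
        field_simp
      rw [hxv]
    · rintro ⟨k, hk, rfl⟩
      have h := hfix (k:ℤ)
      push_cast at h ⊢
      exact h
  have part2 : (Set.univ : Set (AddCircle (1:ℝ)))
      = {t | f t = t} ∪ ⋃ j ∈ {j : ℕ | j ≤ d}, I j := by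
    refine (eq_univ_iff_forall.mpr fun t => ?_).symm
    obtain ⟨x, hx, rfl⟩ := exists_rep 0 t
    rw [zero_add] at hx
    obtain ⟨j, hj, hxl, hxr⟩ := arc_cover d hx.1 hx.2.le
    rcases eq_or_lt_of_le hxl with h1 | h1
    · left
      show f _ = _
      rw [← h1]
      have h := hfix (j:ℤ)
      push_cast at h ⊢
      exact h
    · rcases eq_or_lt_of_le hxr with h2 | h2
      · left
        show f _ = _
        rw [h2]
        have h := hfix ((j:ℤ)+1)
        push_cast at h ⊢
        exact h
      · right
        exact mem_biUnion (show j ∈ {j : ℕ | j ≤ d} from hj) ⟨x, ⟨h1, h2⟩, rfl⟩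
  refine ⟨part1, part2, ?_⟩
  intro i hi
  rw [hclo i]
  have hmem : ∀ j : ℕ, j ≤ d → j ≠ i → ∀ y : ℝ,
      (j:ℝ)/((d:ℝ)+1) ≤ y → y ≤ ((j:ℝ)+1)/((d:ℝ)+1) →
      ∀ t : AddCircle (1:ℝ), t = (y : AddCircle (1:ℝ)) →
      t ∈ ⋃ j ∈ {j : ℕ | j ≤ d ∧ j ≠ i}, closure (I j) := by
    intro j hj hji y h1 h2 t ht
    refine mem_biUnion (show j ∈ {j : ℕ | j ≤ d ∧ j ≠ i} from ⟨hj, hji⟩) ?_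
    rw [hclo j, ht]
    exact ⟨y, ⟨h1, h2⟩, rfl⟩
  ext t
  constructor
  · rintro ⟨s, ⟨x, hx, rfl⟩, rfl⟩
    set z : ℝ := -(d:ℝ)*x + ((i:ℝ)+1) with hzdef
    have hft : f ((x:ℝ) : AddCircle (1:ℝ)) = ((z : ℝ) : AddCircle (1:ℝ)) := by
      rw [hfc, coe_eq_coe_iff]
      exact ⟨-((i:ℤ)+1), by push_cast; ring⟩
    have hx1' : (i:ℝ) ≤ x*((d:ℝ)+1) := (div_le_iff₀ hD).mp hx.1
    have hx2' : x*((d:ℝ)+1) ≤ (i:ℝ)+1 := (le_div_iff₀ hD).mp hx.2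
    have hz1 : ((i:ℝ)+1)/((d:ℝ)+1) ≤ z := by
      rw [div_le_iff₀ hD]
      nlinarith
    have hz2 : z ≤ (i:ℝ)/((d:ℝ)+1) + 1 := by
      rw [← sub_le_iff_le_add, le_div_iff₀ hD]
      nlinarith
    by_cases hzle : z ≤ 1
    · have hz0 : (0:ℝ) ≤ z := le_trans (by positivity) hz1
      obtain ⟨j, hj, hl, hr⟩ := arc_cover d hz0 hzle
      by_cases hji : j = i
      · subst hji
        have hzv : z = ((j:ℝ)+1)/((d:ℝ)+1) := le_antisymm hr hz1
        by_cases hid : j = d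
        · refine hmem 0 (Nat.zero_le d) (by omega) 0 (by norm_num) (by positivity) _ ?_
          rw [hft, coe_eq_coe_iff]
          refine ⟨1, ?_⟩
          rw [hzv, hid]
          push_cast
          field_simp
          norm_num
        · refine hmem (j+1) (by omega) (by omega) z ?_ ?_ _ hft
          · rw [hzv]; push_cast; exact le_rfl
          · rw [hzv]; push_cast; gcongr <;> linarith
      · exact hmem j hj hji z hl hr _ hft
    · push_neg at hzle
      have hiD : (i:ℝ)/((d:ℝ)+1) ≤ 1 := by
        rw [div_le_iff₀ hD]
        have : (i:ℝ) ≤ (d:ℝ) := by exact_mod_cast hi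
        nlinarith
      have h0' : (0:ℝ) ≤ z - 1 := by linarith
      have h1' : z - 1 ≤ 1 := by linarith
      obtain ⟨j, hj, hl, hr⟩ := arc_cover d h0' h1'
      have hcz : ((z:ℝ) : AddCircle (1:ℝ)) = ((z - 1 : ℝ) : AddCircle (1:ℝ)) := by
        rw [coe_eq_coe_iff]; exact ⟨1, by push_cast; ring⟩
      by_cases hji : j = i
      · subst hji
        have hi1 : 1 ≤ j := by
          by_contra h
          have hj0 : j = 0 := by omega
          rw [hj0] at hz2
          norm_num at hz2
          linarith
        have hzu : z - 1 = (j:ℝ)/((d:ℝ)+1) := le_antisymm (by linarith) hl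
        have hc : ((j-1:ℕ):ℝ) = (j:ℝ) - 1 := by
          rw [Nat.cast_sub hi1]; norm_num
        refine hmem (j-1) (by omega) (by omega) (z-1) ?_ ?_ _ (hft.trans hcz)
        · rw [hc, hzu]
          gcongr
          linarith
        · rw [hc, hzu]
          apply le_of_eq
          congr 1
          ring
      · exact hmem j hj hji (z-1) hl hr _ (hft.trans hcz)
  · intro ht
    simp only [mem_iUnion, mem_setOf_eq, exists_prop] at ht
    obtain ⟨j, ⟨hj, hji⟩, htj⟩ := ht
    rw [hclo j] at htj
    obtain ⟨y, ⟨hy1, hy2⟩, rfl⟩ := htj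
    have hy1' : (j:ℝ) ≤ y*((d:ℝ)+1) := (div_le_iff₀ hD).mp hy1
    have hy2' : y*((d:ℝ)+1) ≤ (j:ℝ)+1 := (le_div_iff₀ hD).mp hy2
    have hjd : (j:ℝ) ≤ (d:ℝ) := by exact_mod_cast hj
    have hid' : (i:ℝ) ≤ (d:ℝ) := by exact_mod_cast hi
    have hi0 : (0:ℝ) ≤ (i:ℝ) := Nat.cast_nonneg i
    have hj0 : (0:ℝ) ≤ (j:ℝ) := Nat.cast_nonneg j
    rcases lt_or_ge i j with hij | hij
    · have hij' : (i:ℝ)+1 ≤ (j:ℝ) := by exact_mod_cast hij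
      have hw1' : (i:ℝ)+1 ≤ y*((d:ℝ)+1) := le_trans hij' hy1'
      have hw2' : y*((d:ℝ)+1) ≤ (i:ℝ) + ((d:ℝ)+1) := by linarith
      refine ⟨(((((i:ℝ)+1-y)/(d:ℝ)) : ℝ) : AddCircle (1:ℝ)),
        ⟨((i:ℝ)+1-y)/(d:ℝ), ⟨?_, ?_⟩, rfl⟩, ?_⟩
      · rw [div_le_div_iff₀ hD hdpos]
        nlinarith [hw2']
      · rw [div_le_div_iff₀ hdpos hD]
        nlinarith [hw1']
      · rw [hfc, coe_eq_coe_iff]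
        refine ⟨-((i:ℤ)+1), ?_⟩
        push_cast
        field_simp
        ring
    · have hij2 : j < i := lt_of_le_of_ne hij hji
      have hij' : (j:ℝ)+1 ≤ (i:ℝ) := by exact_mod_cast hij2
      have hw1' : (i:ℝ)+1 ≤ (y+1)*((d:ℝ)+1) := by nlinarith
      have hw2' : (y+1)*((d:ℝ)+1) ≤ (i:ℝ) + ((d:ℝ)+1) := by nlinarith
      refine ⟨(((((i:ℝ)+1-(y+1))/(d:ℝ)) : ℝ) : AddCircle (1:ℝ)),
        ⟨((i:ℝ)+1-(y+1))/(d:ℝ), ⟨?_, ?_⟩, rfl⟩, ?_⟩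
      · rw [div_le_div_iff₀ hD hdpos]
        nlinarith [hw2']
      · rw [div_le_div_iff₀ hdpos hD]
        nlinarith [hw1']
      · rw [hfc, coe_eq_coe_iff]
        refine ⟨-(i:ℤ), ?_⟩
        push_cast
        field_simp
        ring
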